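/- For every integer h ≥ 1, let I_h = ∏_{k=1}^h ((x) + m^k) · ∏_{k=1}^h ((y) + m^k) = ∏_{k=1}^h (x, y^k) · ∏_{k=1}^h (x^k, y) ⊆ ℂ[x,y] be the product of the two complete monomial towers of height h. Then dim_ℂ ℂ[x,y]/I_h = h(h+1)(h+2)/3 + h². -/

import Mathlib

open MvPolynomial

/-- The maximal ideal `m = (x, y)` of the origin in `ℂ[x,y]`. -/
noncomputable def mxy : Ideal (MvPolynomial (Fin 2) ℂ) :=
  Ideal.span {X 0, X 1}

open Finsupp

/-- pair of exponents as a finsupp -/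
noncomputable def P2 (a b : ℕ) : Fin 2 →₀ ℕ := Finsupp.single 0 a + Finsupp.single 1 b

lemma P2_apply0 (a b : ℕ) : P2 a b 0 = a := by
  simp [P2, Finsupp.single_apply]

lemma P2_apply1 (a b : ℕ) : P2 a b 1 = b := by
  simp [P2, Finsupp.single_apply]

lemma P2_add (a b c d : ℕ) : P2 a b + P2 c d = P2 (a+c) (b+d) := by
  ext i
  fin_cases i <;> simp [P2_apply0, P2_apply1, Finsupp.add_apply] <;>
    simp [P2, Finsupp.single_apply]

lemma P2_le {a b c d : ℕ} : P2 a b ≤ P2 c d ↔ a ≤ c ∧ b ≤ d := by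
  constructor
  · intro H
    exact ⟨by simpa [P2_apply0] using H 0, by simpa [P2_apply1] using H 1⟩
  · rintro ⟨h1, h2⟩ i
    fin_cases i <;> simpa [P2_apply0, P2_apply1] using (by assumption)

lemma P2_eq_self (d : Fin 2 →₀ ℕ) : P2 (d 0) (d 1) = d := by
  ext i
  fin_cases i <;> simp [P2_apply0, P2_apply1]

lemma P2_inj {a b c d : ℕ} (H : P2 a b = P2 c d) : a = c ∧ b = d := by
  constructor
  · have := congrArg (fun f => Finsupp.toFun f 0) H
    simpa [P2_apply0] using congrArg (fun f : Fin 2 →₀ ℕ => f 0) H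
  · simpa [P2_apply1] using congrArg (fun f : Fin 2 →₀ ℕ => f 1) H

noncomputable def Mon (S : Set (Fin 2 →₀ ℕ)) : Ideal (MvPolynomial (Fin 2) ℂ) :=
  Ideal.span ((fun s => monomial s (1 : ℂ)) '' S)

lemma monomial_mem_Mon {S : Set (Fin 2 →₀ ℕ)} {d : Fin 2 →₀ ℕ} :
    monomial d (1 : ℂ) ∈ Mon S ↔ ∃ s ∈ S, s ≤ d := by
  rw [Mon, mem_ideal_span_monomial_image]
  constructor
  · intro H
    exact H d (by simp [support_monomial])
  · intro H m hm
    rw [support_monomial, if_neg one_ne_zero, Finset.mem_singleton] at hm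
    exact hm ▸ H

lemma Mon_le {S T : Set (Fin 2 →₀ ℕ)} (H : ∀ s ∈ S, ∃ t ∈ T, t ≤ s) : Mon S ≤ Mon T := by
  rw [Mon, Ideal.span_le]
  rintro _ ⟨s, hs, rfl⟩
  exact monomial_mem_Mon.2 (H s hs)

lemma Mon_eq {S T : Set (Fin 2 →₀ ℕ)} (H1 : ∀ s ∈ S, ∃ t ∈ T, t ≤ s)
    (H2 : ∀ t ∈ T, ∃ s ∈ S, s ≤ t) : Mon S = Mon T :=
  le_antisymm (Mon_le H1) (Mon_le H2)

lemma Mon_mul (S T : Set (Fin 2 →₀ ℕ)) : Mon S * Mon T = Mon (Set.image2 (· + ·) S T) := by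
  rw [Mon, Mon, Mon, Ideal.span_mul_span']
  congr 1
  ext p
  constructor
  · rintro ⟨_, ⟨s, hs, rfl⟩, _, ⟨t, ht, rfl⟩, rfl⟩
    exact ⟨s + t, Set.mem_image2_of_mem hs ht, by simp [monomial_mul]⟩
  · rintro ⟨_, ⟨s, hs, t, ht, rfl⟩, rfl⟩
    exact ⟨monomial s 1, ⟨s, hs, rfl⟩, monomial t 1, ⟨t, ht, rfl⟩,
      by simp [monomial_mul]⟩

lemma Mon_sup (S T : Set (Fin 2 →₀ ℕ)) : Mon S ⊔ Mon T = Mon (S ∪ T) := by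
  rw [Mon, Mon, Mon, Set.image_union, Ideal.span_union]

lemma Mon_zero : Mon {0} = ⊤ := by
  rw [Mon, Set.image_singleton]
  simp [Ideal.span_singleton_eq_top]


lemma mxy_eq : mxy = Mon {P2 1 0, P2 0 1} := by
  rw [mxy, Mon, Set.image_pair]
  congr 2 <;> simp [P2, X]

/-- degree-k exponents -/
def Dk (k : ℕ) : Set (Fin 2 →₀ ℕ) := {d | d 0 + d 1 = k}

lemma mem_Dk {k : ℕ} {d : Fin 2 →₀ ℕ} : d ∈ Dk k ↔ d 0 + d 1 = k := Iff.rfl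

lemma mxy_pow (k : ℕ) : mxy ^ k = Mon (Dk k) := by
  induction k with
  | zero =>
    have : Dk 0 = {0} := by
      ext d
      simp only [mem_Dk, Set.mem_singleton_iff]
      constructor
      · intro hd
        rw [← P2_eq_self d]
        have h0 : d 0 = 0 := by omega
        have h1 : d 1 = 0 := by omega
        rw [h0, h1]; simp [P2]
      · rintro rfl; simp
    rw [pow_zero, this, Mon_zero, Ideal.one_eq_top]
  | succ k ih =>
    rw [pow_succ, ih, mul_comm, mxy_eq, Mon_mul]
    congr 1
    ext d
    constructor
    · rintro ⟨s, hs, t, ht, rfl⟩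
      rw [mem_Dk] at ht
      rcases hs with rfl | rfl
      · show (P2 1 0 + t) ∈ Dk (k+1)
        rw [mem_Dk, Finsupp.add_apply, Finsupp.add_apply, P2_apply0, P2_apply1]
        omega
      · show (P2 0 1 + t) ∈ Dk (k+1)
        rw [mem_Dk, Finsupp.add_apply, Finsupp.add_apply, P2_apply0, P2_apply1]
        omega
    · intro hd
      simp only [mem_Dk] at hd
      by_cases h0 : 0 < d 0
      · refine ⟨P2 1 0, Or.inl rfl, P2 (d 0 - 1) (d 1), ?_, ?_⟩
        · show P2 (d 0 - 1) (d 1) ∈ Dk k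
          rw [mem_Dk, P2_apply0, P2_apply1]; omega
        · show P2 1 0 + P2 (d 0 - 1) (d 1) = d
          rw [P2_add]
          conv_rhs => rw [← P2_eq_self d]
          congr 1 <;> omega
      · refine ⟨P2 0 1, Or.inr rfl, P2 (d 0) (d 1 - 1), ?_, ?_⟩
        · show P2 (d 0) (d 1 - 1) ∈ Dk k
          rw [mem_Dk, P2_apply0, P2_apply1]; omega
        · show P2 0 1 + P2 (d 0) (d 1 - 1) = d
          rw [P2_add]
          conv_rhs => rw [← P2_eq_self d]
          congr 1 <;> omega

lemma factor_eq (k : ℕ) (hk : 1 ≤ k) :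
    Ideal.span {(X 0 : MvPolynomial (Fin 2) ℂ)} + mxy ^ k = Mon {P2 1 0, P2 0 k} := by
  have hX : Ideal.span {(X 0 : MvPolynomial (Fin 2) ℂ)} = Mon {P2 1 0} := by
    rw [Mon, Set.image_singleton]
    congr 2
    simp [P2, X]
  rw [hX, mxy_pow, Submodule.add_eq_sup, Mon_sup]
  apply Mon_eq
  · rintro s (rfl | hs)
    · exact ⟨P2 1 0, Or.inl rfl, le_rfl⟩
    · rw [mem_Dk] at hs
      by_cases h0 : 0 < s 0
      · refine ⟨P2 1 0, Or.inl rfl, ?_⟩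
        intro i
        fin_cases i <;> simp [P2_apply0, P2_apply1] <;> omega
      · refine ⟨P2 0 k, Or.inr rfl, ?_⟩
        have := P2_le (a := 0) (b := k) (c := s 0) (d := s 1)
        rw [P2_eq_self s] at this
        exact this.2 ⟨Nat.zero_le _, by omega⟩
  · rintro t (rfl | rfl)
    · exact ⟨P2 1 0, Or.inl rfl, le_rfl⟩
    · refine ⟨P2 0 k, Or.inr ?_, le_rfl⟩
      rw [mem_Dk, P2_apply0, P2_apply1]
      omega

lemma factor_eq' (k : ℕ) (hk : 1 ≤ k) :
    Ideal.span {(X 1 : MvPolynomial (Fin 2) ℂ)} + mxy ^ k = Mon {P2 0 1, P2 k 0} := by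
  have hX : Ideal.span {(X 1 : MvPolynomial (Fin 2) ℂ)} = Mon {P2 0 1} := by
    rw [Mon, Set.image_singleton]
    congr 2
    simp [P2, X]
  rw [hX, mxy_pow, Submodule.add_eq_sup, Mon_sup]
  apply Mon_eq
  · rintro s (rfl | hs)
    · exact ⟨P2 0 1, Or.inl rfl, le_rfl⟩
    · rw [mem_Dk] at hs
      by_cases h0 : 0 < s 1
      · refine ⟨P2 0 1, Or.inl rfl, ?_⟩
        intro i
        fin_cases i <;> simp [P2_apply0, P2_apply1] <;> omega
      · refine ⟨P2 k 0, Or.inr rfl, ?_⟩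
        have := P2_le (a := k) (b := 0) (c := s 0) (d := s 1)
        rw [P2_eq_self s] at this
        exact this.2 ⟨by omega, Nat.zero_le _⟩
  · rintro t (rfl | rfl)
    · exact ⟨P2 0 1, Or.inl rfl, le_rfl⟩
    · refine ⟨P2 k 0, Or.inr ?_, le_rfl⟩
      rw [mem_Dk, P2_apply0, P2_apply1]
      omega

/-- triangular numbers -/
def Tn (t : ℕ) : ℕ := t * (t + 1) / 2

lemma Tn_two_mul (t : ℕ) : 2 * Tn t = t * (t + 1) := by
  rw [Tn, Nat.mul_div_cancel' (even_iff_two_dvd.mp (Nat.even_mul_succ_self t))]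

lemma Tn_succ (t : ℕ) : Tn (t + 1) = Tn t + (t + 1) := by
  have h1 := Tn_two_mul t
  have h2 := Tn_two_mul (t + 1)
  have h3 : (t + 1) * (t + 1 + 1) = t * (t + 1) + 2 * (t + 1) := by ring
  omega

lemma Tn_zero : Tn 0 = 0 := rfl

lemma le_Tn (t : ℕ) : t ≤ Tn t := by
  have h1 := Tn_two_mul t
  have h2 : t * (t + 1) = t * t + t := by ring
  nlinarith [Nat.zero_le (t * t)]

lemma Tn_add_le (m δ : ℕ) : Tn m + δ ≤ Tn (m + δ) := by
  induction δ with
  | zero => simp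
  | succ d ih =>
    rw [show m + (d + 1) = (m + d) + 1 by omega, Tn_succ]
    omega

lemma Tn_le_Tn {m n : ℕ} (h : m ≤ n) : Tn m ≤ Tn n := by
  have := Tn_add_le m (n - m)
  have : m + (n - m) = n := by omega
  calc Tn m ≤ Tn m + (n - m) := by omega
    _ ≤ Tn (m + (n - m)) := Tn_add_le m (n - m)
    _ = Tn n := by rw [this]

/-- generators of the first tower product -/
def G1 (h : ℕ) : Set (Fin 2 →₀ ℕ) := (fun j => P2 (h - j) (Tn j)) '' (Set.Iic h)

/-- generators of the second tower product -/
def G2 (h : ℕ) : Set (Fin 2 →₀ ℕ) := (fun i => P2 (Tn i) (h - i)) '' (Set.Iic h)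

lemma P2_zero : P2 0 0 = 0 := by simp [P2]

lemma tower1 (h : ℕ) :
    (∏ k ∈ Finset.Icc 1 h, (Ideal.span {(X 0 : MvPolynomial (Fin 2) ℂ)} + mxy ^ k))
      = Mon (G1 h) := by
  induction h with
  | zero =>
    rw [show Finset.Icc 1 0 = ∅ from rfl, Finset.prod_empty]
    have : G1 0 = {0} := by
      rw [G1]
      ext d
      simp only [Set.mem_image, Set.mem_Iic, Set.mem_singleton_iff]
      constructor
      · rintro ⟨j, hj, rfl⟩
        rw [Nat.le_zero] at hj
        subst hj
        exact P2_zero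
      · rintro rfl
        exact ⟨0, le_rfl, P2_zero⟩
    rw [this, Mon_zero, Ideal.one_eq_top]
  | succ h ih =>
    rw [Finset.prod_Icc_succ_top (by omega), ih, factor_eq (h + 1) (by omega),
      mul_comm, Mon_mul]
    apply Mon_eq
    · rintro s ⟨x, hx, g, hg, rfl⟩
      obtain ⟨j, hj, rfl⟩ := hg
      rw [Set.mem_Iic] at hj
      rcases hx with rfl | rfl
      · refine ⟨P2 (h + 1 - j) (Tn j), ⟨j, Set.mem_Iic.mpr (by omega), rfl⟩, ?_⟩
        show P2 (h + 1 - j) (Tn j) ≤ P2 1 0 + P2 (h - j) (Tn j)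
        rw [P2_add, P2_le]
        omega
      · refine ⟨P2 (h + 1 - (j + 1)) (Tn (j + 1)), ⟨j + 1, Set.mem_Iic.mpr (by omega), rfl⟩, ?_⟩
        show P2 (h + 1 - (j + 1)) (Tn (j + 1)) ≤ P2 0 (h + 1) + P2 (h - j) (Tn j)
        rw [P2_add, P2_le, Tn_succ]
        omega
    · rintro t ⟨j, hj, rfl⟩
      rw [Set.mem_Iic] at hj
      rcases Nat.lt_or_ge j (h + 1) with hjh | hjh
      · refine ⟨P2 1 0 + P2 (h - j) (Tn j), ⟨P2 1 0, Or.inl rfl, P2 (h - j) (Tn j),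
          ⟨j, Set.mem_Iic.mpr (by omega), rfl⟩, rfl⟩, ?_⟩
        rw [P2_add, P2_le]
        omega
      · have hj1 : j = h + 1 := by omega
        subst hj1
        refine ⟨P2 0 (h + 1) + P2 (h - h) (Tn h), ⟨P2 0 (h + 1), Or.inr rfl, P2 (h - h) (Tn h),
          ⟨h, Set.mem_Iic.mpr le_rfl, rfl⟩, rfl⟩, ?_⟩
        rw [P2_add, P2_le, Tn_succ]
        omega

lemma tower2 (h : ℕ) :
    (∏ k ∈ Finset.Icc 1 h, (Ideal.span {(X 1 : MvPolynomial (Fin 2) ℂ)} + mxy ^ k))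
      = Mon (G2 h) := by
  induction h with
  | zero =>
    rw [show Finset.Icc 1 0 = ∅ from rfl, Finset.prod_empty]
    have : G2 0 = {0} := by
      rw [G2]
      ext d
      simp only [Set.mem_image, Set.mem_Iic, Set.mem_singleton_iff]
      constructor
      · rintro ⟨j, hj, rfl⟩
        rw [Nat.le_zero] at hj
        subst hj
        exact P2_zero
      · rintro rfl
        exact ⟨0, le_rfl, P2_zero⟩
    rw [this, Mon_zero, Ideal.one_eq_top]
  | succ h ih =>
    rw [Finset.prod_Icc_succ_top (by omega), ih, factor_eq' (h + 1) (by omega),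
      mul_comm, Mon_mul]
    apply Mon_eq
    · rintro s ⟨x, hx, g, hg, rfl⟩
      obtain ⟨j, hj, rfl⟩ := hg
      rw [Set.mem_Iic] at hj
      rcases hx with rfl | rfl
      · refine ⟨P2 (Tn j) (h + 1 - j), ⟨j, Set.mem_Iic.mpr (by omega), rfl⟩, ?_⟩
        show P2 (Tn j) (h + 1 - j) ≤ P2 0 1 + P2 (Tn j) (h - j)
        rw [P2_add, P2_le]
        omega
      · refine ⟨P2 (Tn (j + 1)) (h + 1 - (j + 1)), ⟨j + 1, Set.mem_Iic.mpr (by omega), rfl⟩, ?_⟩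
        show P2 (Tn (j + 1)) (h + 1 - (j + 1)) ≤ P2 (h + 1) 0 + P2 (Tn j) (h - j)
        rw [P2_add, P2_le, Tn_succ]
        omega
    · rintro t ⟨j, hj, rfl⟩
      rw [Set.mem_Iic] at hj
      rcases Nat.lt_or_ge j (h + 1) with hjh | hjh
      · refine ⟨P2 0 1 + P2 (Tn j) (h - j), ⟨P2 0 1, Or.inl rfl, P2 (Tn j) (h - j),
          ⟨j, Set.mem_Iic.mpr (by omega), rfl⟩, rfl⟩, ?_⟩
        rw [P2_add, P2_le]
        omega
      · have hj1 : j = h + 1 := by omega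
        subst hj1
        refine ⟨P2 (h + 1) 0 + P2 (Tn h) (h - h), ⟨P2 (h + 1) 0, Or.inr rfl, P2 (Tn h) (h - h),
          ⟨h, Set.mem_Iic.mpr le_rfl, rfl⟩, rfl⟩, ?_⟩
        rw [P2_add, P2_le, Tn_succ]
        omega

/-- the standard exponents (complement of the staircase) -/
def BB (S : Set (Fin 2 →₀ ℕ)) : Set (Fin 2 →₀ ℕ) := {d | ¬ ∃ s ∈ S, s ≤ d}

lemma finrank_quotient_Mon (S : Set (Fin 2 →₀ ℕ)) :
    Module.finrank ℂ (MvPolynomial (Fin 2) ℂ ⧸ Mon S) = Nat.card (BB S) := by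
  classical
  set R := MvPolynomial (Fin 2) ℂ
  set f : R →ₗ[ℂ] R ⧸ Mon S := (Ideal.Quotient.mkₐ ℂ (Mon S)).toLinearMap with hf
  set v : BB S → R := fun d => monomial d.1 (1 : ℂ) with hv
  have hb := MvPolynomial.basisMonomials (Fin 2) ℂ
  have li0 : LinearIndependent ℂ v := by
    have := (MvPolynomial.basisMonomials (Fin 2) ℂ).linearIndependent
    rw [coe_basisMonomials] at this
    exact this.comp Subtype.val Subtype.val_injective
  -- support of elements of the span
  have hsupp : ∀ q ∈ Submodule.span ℂ (Set.range v), ∀ m ∈ q.support, (m : Fin 2 →₀ ℕ) ∈ BB S := by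
    intro q hq
    induction hq using Submodule.span_induction with
    | mem x hx =>
      obtain ⟨d, rfl⟩ := hx
      intro m hm
      rw [support_monomial, if_neg one_ne_zero, Finset.mem_singleton] at hm
      exact hm ▸ d.2
    | zero => simp
    | add x y _ _ hx hy =>
      intro m hm
      rcases Finset.mem_union.mp (MvPolynomial.support_add hm) with h | h
      · exact hx m h
      · exact hy m h
    | smul c x _ hx =>
      intro m hm
      exact hx m (Finsupp.support_smul hm)
  have hdisj : Disjoint (Submodule.span ℂ (Set.range v)) (LinearMap.ker f) := by
    rw [Submodule.disjoint_def]
    intro q hq hker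
    by_contra hq0
    have hmem : q ∈ Mon S := by
      have h0 : f q = 0 := LinearMap.mem_ker.mp hker
      exact (Ideal.Quotient.eq_zero_iff_mem).mp h0
    obtain ⟨m, hm⟩ : ∃ m, m ∈ q.support := by
      rcases Finset.eq_empty_or_nonempty q.support with he | hne
      · exact absurd (MvPolynomial.support_eq_empty.mp he) hq0
      · exact hne
    obtain ⟨s, hs, hsm⟩ := (MvPolynomial.mem_ideal_span_monomial_image).mp hmem m hm
    exact (hsupp q hq m hm) ⟨s, hs, hsm⟩
  have li : LinearIndependent ℂ (f ∘ v) := li0.map hdisj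
  have hspan : ⊤ ≤ Submodule.span ℂ (Set.range (f ∘ v)) := by
    intro x _
    obtain ⟨p, rfl⟩ := Ideal.Quotient.mk_surjective x
    have hp : p ∈ Submodule.span ℂ (Set.range fun d : Fin 2 →₀ ℕ => monomial d (1 : ℂ)) := by
      have := (MvPolynomial.basisMonomials (Fin 2) ℂ).span_eq
      rw [coe_basisMonomials] at this
      rw [this]; trivial
    have : (Ideal.Quotient.mk (Mon S)) p = f p := rfl
    rw [this]
    have hmap := Submodule.mem_map_of_mem (f := f) hp
    rw [Submodule.map_span] at hmap
    refine Submodule.span_le.mpr ?_ hmap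
    rintro _ ⟨_, ⟨d, rfl⟩, rfl⟩
    by_cases hd : d ∈ BB S
    · exact Submodule.subset_span ⟨⟨d, hd⟩, rfl⟩
    · have : monomial d (1 : ℂ) ∈ Mon S := by
        rw [monomial_mem_Mon]
        by_contra hcon
        exact hd hcon
      have : f (monomial d (1 : ℂ)) = 0 := (Ideal.Quotient.eq_zero_iff_mem).mpr this
      rw [this]
      exact Submodule.zero_mem _
  let b : Module.Basis (BB S) ℂ (R ⧸ Mon S) := Module.Basis.mk li hspan
  exact Module.finrank_eq_nat_card_basis b

/-- generators of the full product ideal -/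
def GK (h : ℕ) : Set (Fin 2 →₀ ℕ) := Set.image2 (· + ·) (G1 h) (G2 h)

def Mcond (h a b : ℕ) : Prop :=
  ∃ i ≤ h, ∃ j ≤ h, h - j + Tn i ≤ a ∧ Tn j + (h - i) ≤ b

lemma mem_BB_GK {h : ℕ} {d : Fin 2 →₀ ℕ} : d ∈ BB (GK h) ↔ ¬ Mcond h (d 0) (d 1) := by
  rw [BB, Set.mem_setOf_eq, not_iff_not]
  constructor
  · rintro ⟨g, ⟨x, ⟨j, hj, rfl⟩, y, ⟨i, hi, rfl⟩, rfl⟩, hle⟩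
    rw [Set.mem_Iic] at hi hj
    refine ⟨i, hi, j, hj, ?_⟩
    have key : P2 (h - j) (Tn j) + P2 (Tn i) (h - i) ≤ P2 (d 0) (d 1) := by
      rwa [P2_eq_self d]
    rw [P2_add, P2_le] at key
    omega
  · rintro ⟨i, hi, j, hj, h1, h2⟩
    refine ⟨P2 (h - j) (Tn j) + P2 (Tn i) (h - i),
      ⟨P2 (h - j) (Tn j), ⟨j, Set.mem_Iic.mpr hj, rfl⟩,
       P2 (Tn i) (h - i), ⟨i, Set.mem_Iic.mpr hi, rfl⟩, rfl⟩, ?_⟩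
    rw [← P2_eq_self d]
    rw [P2_add, P2_le]
    omega

lemma Mcond_iff (h a b : ℕ) :
    Mcond h a b ↔ (h ≤ a ∧ h ≤ b) ∨ (b < h ∧ h + Tn (h - b) ≤ a) ∨
      (a < h ∧ h + Tn (h - a) ≤ b) := by
  constructor
  · rintro ⟨i, hi, j, hj, h1, h2⟩
    by_cases hb : b < h
    · refine Or.inr (Or.inl ⟨hb, ?_⟩)
      have hTj : j ≤ Tn j := le_Tn j
      have hib : h - b ≤ i := by omega
      have hTi : Tn (h - b) + (i - (h - b)) ≤ Tn i := by
        have := Tn_add_le (h - b) (i - (h - b))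
        rwa [show h - b + (i - (h - b)) = i by omega] at this
      omega
    · by_cases ha : a < h
      · refine Or.inr (Or.inr ⟨ha, ?_⟩)
        have hTi : i ≤ Tn i := le_Tn i
        have hja : h - a ≤ j := by omega
        have hTj : Tn (h - a) + (j - (h - a)) ≤ Tn j := by
          have := Tn_add_le (h - a) (j - (h - a))
          rwa [show h - a + (j - (h - a)) = j by omega] at this
        omega
      · exact Or.inl ⟨by omega, by omega⟩
  · rintro (⟨ha, hb⟩ | ⟨hb, hab⟩ | ⟨ha, hab⟩)
    · refine ⟨0, by omega, 0, by omega, ?_⟩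
      rw [Tn_zero]
      omega
    · refine ⟨h - b, by omega, 0, by omega, ?_⟩
      rw [Tn_zero]
      omega
    · refine ⟨0, by omega, h - a, by omega, ?_⟩
      rw [Tn_zero]
      omega

def Bfin (h : ℕ) : Finset (ℕ × ℕ) :=
  ((Finset.range h ×ˢ Finset.range h) ∪
    (Finset.range h).biUnion (fun b => (Finset.Ico h (h + Tn (h - b))).image fun a => (a, b))) ∪
  (Finset.range h).biUnion (fun a => (Finset.Ico h (h + Tn (h - a))).image fun b => (a, b))

lemma mem_Bfin {h a b : ℕ} :
    (a, b) ∈ Bfin h ↔ (a < h ∧ b < h) ∨ (b < h ∧ h ≤ a ∧ a < h + Tn (h - b)) ∨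
      (a < h ∧ h ≤ b ∧ b < h + Tn (h - a)) := by
  simp only [Bfin, Finset.mem_union, Finset.mem_product, Finset.mem_biUnion, Finset.mem_image,
    Finset.mem_Ico, Finset.mem_range, Prod.mk.injEq]
  constructor
  · rintro ((⟨ha, hb⟩ | ⟨b', hb', a', ⟨ha1, ha2⟩, rfl, rfl⟩) | ⟨a', ha', b', ⟨hb1, hb2⟩, rfl, rfl⟩)
    · exact Or.inl ⟨ha, hb⟩
    · exact Or.inr (Or.inl ⟨hb', ha1, ha2⟩)
    · exact Or.inr (Or.inr ⟨ha', hb1, hb2⟩)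
  · rintro (⟨ha, hb⟩ | ⟨hb, ha1, ha2⟩ | ⟨ha, hb1, hb2⟩)
    · exact Or.inl (Or.inl ⟨ha, hb⟩)
    · exact Or.inl (Or.inr ⟨b, hb, a, ⟨ha1, ha2⟩, rfl, rfl⟩)
    · exact Or.inr ⟨a, ha, b, ⟨hb1, hb2⟩, rfl, rfl⟩

lemma mem_Bfin_iff_not_Mcond {h a b : ℕ} : (a, b) ∈ Bfin h ↔ ¬ Mcond h a b := by
  rw [mem_Bfin, Mcond_iff]
  omega

lemma six_sum (h : ℕ) : 6 * ∑ j ∈ Finset.range h, Tn (j + 1) = h * (h + 1) * (h + 2) := by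
  induction h with
  | zero => simp
  | succ h ih =>
    rw [Finset.sum_range_succ, Nat.mul_add, ih]
    have e1 : 2 * Tn (h + 1) = (h + 1) * (h + 2) := by
      rw [Tn_two_mul]
    calc h * (h + 1) * (h + 2) + 6 * Tn (h + 1)
        = h * (h + 1) * (h + 2) + 3 * (2 * Tn (h + 1)) := by ring
      _ = h * (h + 1) * (h + 2) + 3 * ((h + 1) * (h + 2)) := by rw [e1]
      _ = (h + 1) * (h + 1 + 1) * (h + 1 + 2) := by ring

lemma sum_reflect_Tn (h : ℕ) :
    ∑ b ∈ Finset.range h, Tn (h - b) = ∑ j ∈ Finset.range h, Tn (j + 1) := by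
  rw [← Finset.sum_range_reflect (fun j => Tn (j + 1)) h]
  apply Finset.sum_congr rfl
  intro b hb
  rw [Finset.mem_range] at hb
  congr 1
  omega

lemma card_Bfin (h : ℕ) :
    (Bfin h).card = h * h + 2 * ∑ j ∈ Finset.range h, Tn (j + 1) := by
  have hAB : Disjoint (Finset.range h ×ˢ Finset.range h)
      ((Finset.range h).biUnion
        (fun b => (Finset.Ico h (h + Tn (h - b))).image fun a => (a, b))) := by
    rw [Finset.disjoint_left]
    rintro ⟨a, b⟩ hA hB
    simp only [Finset.mem_product, Finset.mem_range] at hA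
    simp only [Finset.mem_biUnion, Finset.mem_image, Finset.mem_Ico, Finset.mem_range,
      Prod.mk.injEq] at hB
    obtain ⟨b', _, a', ⟨ha1, _⟩, rfl, rfl⟩ := hB
    omega
  have hABC : Disjoint ((Finset.range h ×ˢ Finset.range h) ∪
      (Finset.range h).biUnion
        (fun b => (Finset.Ico h (h + Tn (h - b))).image fun a => (a, b)))
      ((Finset.range h).biUnion
        (fun a => (Finset.Ico h (h + Tn (h - a))).image fun b => (a, b))) := by
    rw [Finset.disjoint_left]
    rintro ⟨a, b⟩ hAB' hC
    simp only [Finset.mem_biUnion, Finset.mem_image, Finset.mem_Ico, Finset.mem_range,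
      Prod.mk.injEq] at hC
    obtain ⟨a', _, b', ⟨hb1, _⟩, rfl, rfl⟩ := hC
    simp only [Finset.mem_union, Finset.mem_product, Finset.mem_biUnion, Finset.mem_image,
      Finset.mem_Ico, Finset.mem_range, Prod.mk.injEq] at hAB'
    rcases hAB' with ⟨_, hb⟩ | ⟨b'', hb'', a'', _, _, hbb⟩ <;> omega
  have cardB : ((Finset.range h).biUnion
      (fun b => (Finset.Ico h (h + Tn (h - b))).image fun a => (a, b))).card
      = ∑ b ∈ Finset.range h, Tn (h - b) := by
    rw [Finset.card_biUnion]
    · apply Finset.sum_congr rfl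
      intro b _
      rw [Finset.card_image_of_injective _
        (fun x y hxy => congrArg Prod.fst (hxy : (x, b) = (y, b))), Nat.card_Ico]
      omega
    · intro x hx y hy hxy
      rw [Function.onFun, Finset.disjoint_left]
      rintro ⟨a, b⟩ h1 h2
      simp only [Finset.mem_image, Finset.mem_Ico, Prod.mk.injEq] at h1 h2
      obtain ⟨_, _, _, rfl⟩ := h1
      obtain ⟨_, _, _, rfl⟩ := h2
      exact hxy rfl
  have cardC : ((Finset.range h).biUnion
      (fun a => (Finset.Ico h (h + Tn (h - a))).image fun b => (a, b))).card
      = ∑ a ∈ Finset.range h, Tn (h - a) := by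
    rw [Finset.card_biUnion]
    · apply Finset.sum_congr rfl
      intro a _
      rw [Finset.card_image_of_injective _ (fun x y hxy => congrArg Prod.snd
        (hxy : (a, x) = (a, y))), Nat.card_Ico]
      omega
    · intro x hx y hy hxy
      rw [Function.onFun, Finset.disjoint_left]
      rintro ⟨a, b⟩ h1 h2
      simp only [Finset.mem_image, Finset.mem_Ico, Prod.mk.injEq] at h1 h2
      obtain ⟨_, _, rfl, _⟩ := h1
      obtain ⟨_, _, rfl, _⟩ := h2
      exact hxy rfl
  rw [Bfin, Finset.card_union_of_disjoint hABC, Finset.card_union_of_disjoint hAB,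
    Finset.card_product, Finset.card_range, cardB, cardC, sum_reflect_Tn]
  ring


/-- **Colength of the product of the two complete monomial towers of height `h`.**
For `I_h = ∏_{k=1}^h ((x) + m^k) · ∏_{k=1}^h ((y) + m^k)` one has
`dim_ℂ ℂ[x,y]/I_h = h(h+1)(h+2)/3 + h²`. -/
theorem colength_product_complete_monomial_towers (h : ℕ) (hh : 1 ≤ h) :
    Module.finrank ℂ
      (MvPolynomial (Fin 2) ℂ ⧸
        ((∏ k ∈ Finset.Icc 1 h, (Ideal.span {(X 0 : MvPolynomial (Fin 2) ℂ)} + mxy ^ k)) *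
         (∏ k ∈ Finset.Icc 1 h, (Ideal.span {(X 1 : MvPolynomial (Fin 2) ℂ)} + mxy ^ k)))) =
      h * (h + 1) * (h + 2) / 3 + h ^ 2 := by
  rw [tower1 h, tower2 h, Mon_mul]
  have hGK : Set.image2 (· + ·) (G1 h) (G2 h) = GK h := rfl
  rw [hGK, finrank_quotient_Mon]
  have hinj : Function.Injective (fun p : ℕ × ℕ => P2 p.1 p.2) := by
    rintro ⟨a, b⟩ ⟨c, d⟩ hpq
    obtain ⟨h1, h2⟩ := P2_inj hpq
    simp only [Prod.mk.injEq]
    exact ⟨h1, h2⟩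
  have hset : BB (GK h) = (fun p : ℕ × ℕ => P2 p.1 p.2) '' ↑(Bfin h) := by
    ext d
    rw [mem_BB_GK]
    constructor
    · intro hd
      refine ⟨(d 0, d 1), ?_, P2_eq_self d⟩
      rw [Finset.mem_coe, mem_Bfin_iff_not_Mcond]
      exact hd
    · rintro ⟨⟨a, b⟩, hmem, rfl⟩
      rw [Finset.mem_coe, mem_Bfin_iff_not_Mcond] at hmem
      simpa [P2_apply0, P2_apply1] using hmem
  rw [hset, Nat.card_coe_set_eq, Set.ncard_image_of_injective _ hinj, Set.ncard_coe_finset,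
    card_Bfin]
  have h6 := six_sum h
  have hsq : h ^ 2 = h * h := sq h
  rw [hsq]
  generalize hN : h * (h + 1) * (h + 2) = N at h6 ⊢
  generalize hM : h * h = M
  omega
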